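/- Let A be an N×N Hermitian matrix (discrete Laplacian Δ_h) and let U^{n+1}, U^n, U^{n-1} ∈ ℂᴺ satisfy i(U^{n+1}-U^{n-1})/(2τ) + A·Û^n + c·|U^n|²·Û^n = 0 componentwise, where Û^n = (U^{n+1}+U^{n-1})/2, c ∈ ℝ, τ > 0, and |U^n|² denotes the vector of squared moduli. Then ‖U^{n+1}‖² = ‖U^{n-1}‖² in the standard (weighted) ℓ²-norm. -/

import Mathlib

open Matrix

/-- Discrete mass conservation of the linearly implicit scheme:
if `i(U^{n+1}-U^{n-1})/(2τ) + A Û^n + c |U^n|² Û^n = 0` with `A` Hermitian,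
then `‖U^{n+1}‖² = ‖U^{n-1}‖²`. -/
theorem discrete_mass_conservation {N : ℕ}
    (A : Matrix (Fin N) (Fin N) ℂ) (hA : A.IsHermitian)
    (τ c : ℝ) (hτ : 0 < τ) (Up Un Um : Fin N → ℂ)
    (hscheme : ∀ j, Complex.I * ((Up j - Um j) / (2 * (τ : ℂ)))
      + (A *ᵥ fun i => (Up i + Um i) / 2) j
      + (c : ℂ) * ((Complex.normSq (Un j) : ℂ)) * ((Up j + Um j) / 2) = 0) :
    ∑ j, Complex.normSq (Up j) = ∑ j, Complex.normSq (Um j) := by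
  set v : Fin N → ℂ := fun i => (Up i + Um i) / 2 with hv
  have hτ0 : (τ : ℂ) ≠ 0 := Complex.ofReal_ne_zero.mpr hτ.ne'
  have key : ∀ j, Complex.I * (Up j - Um j)
      = -(2 * (τ : ℂ)) * ((A *ᵥ v) j
        + (c : ℂ) * ((Complex.normSq (Un j) : ℂ)) * v j) := by
    intro j
    have h := hscheme j
    field_simp at h
    linear_combination h
  set S := ∑ j, (starRingEnd ℂ) (v j) * (Up j - Um j) with hS
  set R1 := ∑ j, (starRingEnd ℂ) (v j) * (A *ᵥ v) j with hR1
  set R2 := ∑ j, ((Complex.normSq (Un j) : ℂ)) * ((starRingEnd ℂ) (v j) * v j) with hR2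
  have hiS : Complex.I * S = -(2 * (τ : ℂ)) * (R1 + (c : ℂ) * R2) := by
    simp only [hS, hR1, hR2, mul_add, neg_mul, Finset.mul_sum, ← Finset.sum_add_distrib,
      ← Finset.sum_neg_distrib]
    refine Finset.sum_congr rfl fun j _ => ?_
    linear_combination (starRingEnd ℂ) (v j) * key j
  have hR1real : (starRingEnd ℂ) R1 = R1 := by
    have h0 : R1 = star v ⬝ᵥ A *ᵥ v := by
      simp [hR1, dotProduct, Pi.star_apply]
    rw [h0]
    have h1 : star (star v ⬝ᵥ A *ᵥ v) = star (A *ᵥ v) ⬝ᵥ v := by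
      rw [star_dotProduct]; simp [dotProduct, mul_comm]
    calc (starRingEnd ℂ) (star v ⬝ᵥ A *ᵥ v) = star (A *ᵥ v) ⬝ᵥ v := h1
      _ = (star v ᵥ* Aᴴ) ⬝ᵥ v := by rw [star_mulVec]
      _ = (star v ᵥ* A) ⬝ᵥ v := by rw [hA.eq]
      _ = star v ⬝ᵥ A *ᵥ v := by rw [← dotProduct_mulVec]
  have hR2real : (starRingEnd ℂ) R2 = R2 := by
    rw [hR2, map_sum]
    refine Finset.sum_congr rfl fun j _ => ?_
    simp [mul_comm, Complex.conj_ofReal]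
  have hSconj : (starRingEnd ℂ) S = -S := by
    have h1 : (starRingEnd ℂ) (Complex.I * S) = Complex.I * S := by
      rw [hiS, _root_.map_mul, map_add, hR1real, _root_.map_mul, hR2real]
      simp [Complex.conj_ofReal, map_ofNat]
    rw [_root_.map_mul, Complex.conj_I] at h1
    linear_combination Complex.I * h1 + ((starRingEnd ℂ) S + S) * Complex.I_sq
  have hre : S + (starRingEnd ℂ) S
      = (∑ j, (Complex.normSq (Up j) : ℂ)) - ∑ j, (Complex.normSq (Um j) : ℂ) := by
    rw [hS, map_sum, ← Finset.sum_add_distrib, ← Finset.sum_sub_distrib]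
    refine Finset.sum_congr rfl fun j _ => ?_
    simp only [hv, _root_.map_mul, map_sub, map_add, map_div₀, Complex.conj_conj, map_ofNat]
    linear_combination Complex.mul_conj (Up j) - Complex.mul_conj (Um j)
  rw [hSconj, add_neg_cancel] at hre
  have hfin : (∑ j, (Complex.normSq (Up j) : ℂ)) = ∑ j, (Complex.normSq (Um j) : ℂ) := by
    linear_combination -hre
  exact_mod_cast hfin
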